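/- arXiv:2209.05442 — 2 statements merged into one kernel-verified Lean document; each statement's English description precedes it below -/
import Mathlib

section
/- Let q_0 be a probability density on ℝ^n and for each x_0 ∈ ℝ^n let q_t(·|x_0) be a probability density on ℝ^n that is everywhere strictly positive and differentiable in its first argument, with marginal density q_t(x) = ∫ q_0(x_0) q_t(x|x_0) dx_0 also strictly positive and differentiable, and suppose differentiation under the integral sign is valid, i.e. ∇_x q_t(x) = ∫ q_0(x_0) ∇_x q_t(x|x_0) dx_0 for every x. Then there exists a constant C ∈ ℝ, depending only on q_0 and the kernels q_t(·|x_0) and not on s, such that for every measurable s : ℝ^n → ℝ^n for which all the expectations below are finite, J_1(s) = J_2(s) + C, where J_1(s) = (1/2) E_{x ~ q_t}[ ‖s(x) − ∇_x log q_t(x)‖² ] and J_2(s) = (1/2) E_{(x_0, x) ~ q_0(x_0) q_t(x|x_0)}[ ‖s(x) − ∇_x log q_t(x|x_0)‖² ]. -/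
open MeasureTheory Real Filter
open scoped RealInnerProductSpace

theorem my_grad_log {n : ℕ} (f : EuclideanSpace ℝ (Fin n) → ℝ)
    (hf : Differentiable ℝ f) (hpos : ∀ x, 0 < f x) (x : EuclideanSpace ℝ (Fin n)) :
    gradient (fun y => Real.log (f y)) x = (f x)⁻¹ • gradient f x := by
  have h : HasFDerivAt (fun y => Real.log (f y)) ((f x)⁻¹ • fderiv ℝ f x) x :=
    (Real.hasDerivAt_log (hpos x).ne').comp_hasFDerivAt x (hf x).hasFDerivAt
  rw [gradient, gradient, h.fderiv, _root_.map_smul]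

theorem my_meas_grad {n : ℕ} (qc : EuclideanSpace ℝ (Fin n) → EuclideanSpace ℝ (Fin n) → ℝ)
    (hdiff : ∀ x0, Differentiable ℝ (qc x0)) (hmeas : Measurable (Function.uncurry qc)) :
    Measurable (fun p : EuclideanSpace ℝ (Fin n) × EuclideanSpace ℝ (Fin n) =>
      gradient (qc p.1) p.2) := by
  have key : ∀ v : EuclideanSpace ℝ (Fin n),
      Measurable (fun p : EuclideanSpace ℝ (Fin n) × EuclideanSpace ℝ (Fin n) =>
        fderiv ℝ (qc p.1) p.2 v) := by
    intro v
    apply measurable_of_tendsto_metrizable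
      (f := fun k (p : EuclideanSpace ℝ (Fin n) × EuclideanSpace ℝ (Fin n)) =>
        (qc p.1 (p.2 + (((k:ℝ)+1)⁻¹) • v) - qc p.1 p.2) / (((k:ℝ)+1)⁻¹ - 0))
    · intro k
      exact ((hmeas.comp (measurable_fst.prodMk (measurable_snd.add_const _))).sub
        (hmeas.comp (measurable_fst.prodMk measurable_snd))).div_const _
    · rw [tendsto_pi_nhds]
      intro p
      have hd : HasDerivAt (fun t : ℝ => qc p.1 (p.2 + t • v)) (fderiv ℝ (qc p.1) p.2 v) 0 := by
        have h1 : HasDerivAt (fun t : ℝ => p.2 + t • v) v 0 := by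
          simpa using ((hasDerivAt_id (0:ℝ)).smul_const v).const_add p.2
        have h2 : HasFDerivAt (qc p.1) (fderiv ℝ (qc p.1) p.2) ((fun t : ℝ => p.2 + t • v) 0) := by
          simpa using (hdiff p.1 p.2).hasFDerivAt
        exact h2.comp_hasDerivAt 0 h1
      rw [hasDerivAt_iff_tendsto_slope] at hd
      have hu : Tendsto (fun k : ℕ => ((k:ℝ)+1)⁻¹) atTop (nhdsWithin 0 {x | x ≠ 0}) := by
        rw [tendsto_nhdsWithin_iff]
        constructor
        · simpa only [one_div] using tendsto_one_div_add_atTop_nhds_zero_nat (𝕜 := ℝ)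
        · exact Filter.Eventually.of_forall (fun k => inv_ne_zero (by positivity))
      exact (hd.comp hu).congr (fun k => by simp [slope_def_field, Function.comp])
  have hcoord : ∀ (f : EuclideanSpace ℝ (Fin n) → ℝ) (x : EuclideanSpace ℝ (Fin n)) (i : Fin n),
      gradient f x i = fderiv ℝ f x (EuclideanSpace.single i (1:ℝ)) := by
    intro f x i
    have h := InnerProductSpace.toDual_symm_apply (𝕜 := ℝ) (E := EuclideanSpace ℝ (Fin n))
      (y := fderiv ℝ f x) (x := EuclideanSpace.single i (1:ℝ))
    rw [gradient]
    rw [← h, real_inner_comm, EuclideanSpace.inner_single_left]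
    simp
  refine (WithLp.measurable_toLp 2 (Fin n → ℝ)).comp
    (f := fun p : EuclideanSpace ℝ (Fin n) × EuclideanSpace ℝ (Fin n) =>
      fun i => gradient (qc p.1) p.2 i) ?_
  rw [measurable_pi_iff]
  intro i
  simp only [hcoord]
  exact key (EuclideanSpace.single i (1:ℝ))


/-- **Score matching equivalence (Theorem 1 of the paper).**
If the conditional densities `qc x0 = q_t(·|x0)` are everywhere positive and differentiable,
the marginal `qt x = ∫ q0 x0 * qc x0 x dx0` is positive and differentiable, differentiation
under the integral sign is valid, and the (s-independent) score second moments are finite,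
then there is a constant `C` not depending on `s` such that for every measurable `s` with
all relevant expectations finite, `J₁(s) = J₂(s) + C`. -/
theorem score_matching_equivalence {n : ℕ}
    (q0 : EuclideanSpace ℝ (Fin n) → ℝ)
    (qc : EuclideanSpace ℝ (Fin n) → EuclideanSpace ℝ (Fin n) → ℝ)
    (qt : EuclideanSpace ℝ (Fin n) → ℝ)
    -- q0 is a probability density
    (hq0_nonneg : ∀ x0, 0 ≤ q0 x0)
    (hq0_meas : Measurable q0)
    (hq0_prob : ∫ x0, q0 x0 = 1)
    -- the conditional densities are fully supported, differentiable probability densities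
    (hqc_pos : ∀ x0 x, 0 < qc x0 x)
    (hqc_diff : ∀ x0, Differentiable ℝ (qc x0))
    (hqc_meas : Measurable (Function.uncurry qc))
    (hqc_prob : ∀ x0, ∫ x, qc x0 x = 1)
    -- qt is the marginal density, strictly positive and differentiable
    (hqt_def : ∀ x, qt x = ∫ x0, q0 x0 * qc x0 x)
    (hqt_pos : ∀ x, 0 < qt x)
    (hqt_diff : Differentiable ℝ qt)
    -- differentiation under the integral sign is valid
    (hswap : ∀ x, gradient qt x = ∫ x0, q0 x0 • gradient (fun y => qc x0 y) x)
    -- the (s-independent) second moments of the scores are finite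
    (hscore_t : Integrable (fun x => qt x * ‖gradient (fun y => Real.log (qt y)) x‖ ^ 2))
    (hscore_c : Integrable (fun p : EuclideanSpace ℝ (Fin n) × EuclideanSpace ℝ (Fin n) =>
      q0 p.1 * qc p.1 p.2 * ‖gradient (fun y => Real.log (qc p.1 y)) p.2‖ ^ 2)) :
    ∃ C : ℝ, ∀ s : EuclideanSpace ℝ (Fin n) → EuclideanSpace ℝ (Fin n),
      Measurable s →
      -- all the expectations below are finite
      Integrable (fun x => qt x * ‖s x‖ ^ 2) →
      Integrable (fun x => qt x * ‖s x - gradient (fun y => Real.log (qt y)) x‖ ^ 2) →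
      Integrable (fun p : EuclideanSpace ℝ (Fin n) × EuclideanSpace ℝ (Fin n) =>
        q0 p.1 * qc p.1 p.2 * ‖s p.2 - gradient (fun y => Real.log (qc p.1 y)) p.2‖ ^ 2) →
      -- J₁(s) = J₂(s) + C
      (1 / 2) * ∫ x, qt x * ‖s x - gradient (fun y => Real.log (qt y)) x‖ ^ 2
        = (1 / 2) * (∫ p : EuclideanSpace ℝ (Fin n) × EuclideanSpace ℝ (Fin n),
            q0 p.1 * qc p.1 p.2 * ‖s p.2 - gradient (fun y => Real.log (qc p.1 y)) p.2‖ ^ 2)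
          + C := by
  classical
  -- abbreviations (plain functions, fully applied in statements)
  have hqcne : ∀ x0 x, qc x0 x ≠ 0 := fun x0 x => (hqc_pos x0 x).ne'
  have hg : ∀ x, gradient (fun y => Real.log (qt y)) x = (qt x)⁻¹ • gradient qt x := fun x =>
    my_grad_log qt hqt_diff hqt_pos x
  have hgc : ∀ (x0 x : EuclideanSpace ℝ (Fin n)),
      gradient (fun y => Real.log (qc x0 y)) x = (qc x0 x)⁻¹ • gradient (qc x0) x := fun x0 x =>
    my_grad_log (qc x0) (hqc_diff x0) (hqc_pos x0) x
  have hgradqc : ∀ (x0 x : EuclideanSpace ℝ (Fin n)),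
      gradient (qc x0) x = qc x0 x • gradient (fun y => Real.log (qc x0 y)) x := by
    intro x0 x
    rw [hgc x0 x, smul_smul, mul_inv_cancel₀ (hqcne x0 x), one_smul]
  have hMgradqc : Measurable (fun p : EuclideanSpace ℝ (Fin n) × EuclideanSpace ℝ (Fin n) =>
      gradient (qc p.1) p.2) := my_meas_grad qc hqc_diff hqc_meas
  have hMqc : Measurable (fun p : EuclideanSpace ℝ (Fin n) × EuclideanSpace ℝ (Fin n) =>
      qc p.1 p.2) := hqc_meas
  have hqint : ∀ x, Integrable (fun x0 => q0 x0 * qc x0 x) := by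
    intro x
    by_contra hcon
    have := hqt_def x
    rw [integral_undef hcon] at this
    exact absurd this (hqt_pos x).ne'
  refine ⟨(1/2) * (∫ x, qt x * ‖gradient (fun y => Real.log (qt y)) x‖^2)
    - (1/2) * (∫ p : EuclideanSpace ℝ (Fin n) × EuclideanSpace ℝ (Fin n),
        q0 p.1 * qc p.1 p.2 * ‖gradient (fun y => Real.log (qc p.1 y)) p.2‖^2), ?_⟩
  intro s hs h1 h2 h3
  have hip_t : Integrable (fun x =>
      qt x * ⟪s x, gradient (fun y => Real.log (qt y)) x⟫) := by
    have heq : (fun x => qt x * ⟪s x, gradient (fun y => Real.log (qt y)) x⟫)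
        = fun x => (1/2 : ℝ) * ((qt x * ‖s x‖^2
            + qt x * ‖gradient (fun y => Real.log (qt y)) x‖^2)
            - qt x * ‖s x - gradient (fun y => Real.log (qt y)) x‖^2) := by
      funext x
      rw [norm_sub_sq_real]
      ring
    rw [heq]
    exact Integrable.const_mul ((h1.add hscore_t).sub h2) _
  have h_sc : Integrable (fun p : EuclideanSpace ℝ (Fin n) × EuclideanSpace ℝ (Fin n) =>
      q0 p.1 * qc p.1 p.2 * ‖s p.2‖^2) := by
    refine Integrable.mono'
      (g := fun p : EuclideanSpace ℝ (Fin n) × EuclideanSpace ℝ (Fin n) =>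
        2 * (q0 p.1 * qc p.1 p.2 * ‖s p.2 - gradient (fun y => Real.log (qc p.1 y)) p.2‖^2)
        + 2 * (q0 p.1 * qc p.1 p.2 * ‖gradient (fun y => Real.log (qc p.1 y)) p.2‖^2))
      ((h3.const_mul 2).add (hscore_c.const_mul 2)) ?_ ?_
    · exact (((hq0_meas.comp measurable_fst).mul hMqc).mul
        ((hs.comp measurable_snd).norm.pow measurable_const)).aestronglyMeasurable
    · refine Eventually.of_forall fun p => ?_
      have hnn : 0 ≤ q0 p.1 * qc p.1 p.2 :=
        mul_nonneg (hq0_nonneg p.1) (hqc_pos p.1 p.2).le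
      have htri : ‖s p.2‖ ≤ ‖s p.2 - gradient (fun y => Real.log (qc p.1 y)) p.2‖
          + ‖gradient (fun y => Real.log (qc p.1 y)) p.2‖ := by
        calc ‖s p.2‖ = ‖(s p.2 - gradient (fun y => Real.log (qc p.1 y)) p.2)
            + gradient (fun y => Real.log (qc p.1 y)) p.2‖ := by rw [sub_add_cancel]
        _ ≤ _ := norm_add_le _ _
      have hsq : ‖s p.2‖^2 ≤ 2 * ‖s p.2 - gradient (fun y => Real.log (qc p.1 y)) p.2‖^2
          + 2 * ‖gradient (fun y => Real.log (qc p.1 y)) p.2‖^2 := by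
        nlinarith [norm_nonneg (s p.2),
          norm_nonneg (s p.2 - gradient (fun y => Real.log (qc p.1 y)) p.2),
          norm_nonneg (gradient (fun y => Real.log (qc p.1 y)) p.2),
          sq_nonneg (‖s p.2 - gradient (fun y => Real.log (qc p.1 y)) p.2‖
            - ‖gradient (fun y => Real.log (qc p.1 y)) p.2‖)]
      have hb : q0 p.1 * qc p.1 p.2 * ‖s p.2‖^2
          ≤ 2 * (q0 p.1 * qc p.1 p.2 * ‖s p.2 - gradient (fun y => Real.log (qc p.1 y)) p.2‖^2)
            + 2 * (q0 p.1 * qc p.1 p.2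
              * ‖gradient (fun y => Real.log (qc p.1 y)) p.2‖^2) := by nlinarith
      calc ‖q0 p.1 * qc p.1 p.2 * ‖s p.2‖^2‖
          = q0 p.1 * qc p.1 p.2 * ‖s p.2‖^2 := by
            rw [Real.norm_eq_abs, abs_of_nonneg (by positivity)]
        _ ≤ _ := hb
      
  have hip_c : Integrable (fun p : EuclideanSpace ℝ (Fin n) × EuclideanSpace ℝ (Fin n) =>
      q0 p.1 * qc p.1 p.2 * ⟪s p.2, gradient (fun y => Real.log (qc p.1 y)) p.2⟫) := by
    have heq : (fun p : EuclideanSpace ℝ (Fin n) × EuclideanSpace ℝ (Fin n) =>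
        q0 p.1 * qc p.1 p.2 * ⟪s p.2, gradient (fun y => Real.log (qc p.1 y)) p.2⟫)
        = fun p => (1/2 : ℝ) * ((q0 p.1 * qc p.1 p.2 * ‖s p.2‖^2
            + q0 p.1 * qc p.1 p.2 * ‖gradient (fun y => Real.log (qc p.1 y)) p.2‖^2)
            - q0 p.1 * qc p.1 p.2
              * ‖s p.2 - gradient (fun y => Real.log (qc p.1 y)) p.2‖^2) := by
      funext p
      rw [norm_sub_sq_real]
      ring
    rw [heq]
    exact Integrable.const_mul ((h_sc.add hscore_c).sub h3) _
  have EJ1 : ∫ x, qt x * ‖s x - gradient (fun y => Real.log (qt y)) x‖^2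
      = (∫ x, qt x * ‖s x‖^2)
        - 2 * (∫ x, qt x * ⟪s x, gradient (fun y => Real.log (qt y)) x⟫)
        + ∫ x, qt x * ‖gradient (fun y => Real.log (qt y)) x‖^2 := by
    have heq : (fun x => qt x * ‖s x - gradient (fun y => Real.log (qt y)) x‖^2)
        = fun x => (qt x * ‖s x‖^2
            - 2 * (qt x * ⟪s x, gradient (fun y => Real.log (qt y)) x⟫))
            + qt x * ‖gradient (fun y => Real.log (qt y)) x‖^2 := by
      funext x
      rw [norm_sub_sq_real]
      ring
    have i2 : Integrable (fun x =>
        2 * (qt x * ⟪s x, gradient (fun y => Real.log (qt y)) x⟫)) := hip_t.const_mul 2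
    have i1 : Integrable (fun x => qt x * ‖s x‖^2
        - 2 * (qt x * ⟪s x, gradient (fun y => Real.log (qt y)) x⟫)) := h1.sub i2
    rw [heq, integral_add i1 hscore_t, integral_sub h1 i2, integral_const_mul]
  have EJ2 : ∫ p : EuclideanSpace ℝ (Fin n) × EuclideanSpace ℝ (Fin n),
      q0 p.1 * qc p.1 p.2 * ‖s p.2 - gradient (fun y => Real.log (qc p.1 y)) p.2‖^2
      = (∫ p : EuclideanSpace ℝ (Fin n) × EuclideanSpace ℝ (Fin n),
          q0 p.1 * qc p.1 p.2 * ‖s p.2‖^2)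
        - 2 * (∫ p : EuclideanSpace ℝ (Fin n) × EuclideanSpace ℝ (Fin n),
          q0 p.1 * qc p.1 p.2 * ⟪s p.2, gradient (fun y => Real.log (qc p.1 y)) p.2⟫)
        + ∫ p : EuclideanSpace ℝ (Fin n) × EuclideanSpace ℝ (Fin n),
          q0 p.1 * qc p.1 p.2 * ‖gradient (fun y => Real.log (qc p.1 y)) p.2‖^2 := by
    have heq : (fun p : EuclideanSpace ℝ (Fin n) × EuclideanSpace ℝ (Fin n) =>
        q0 p.1 * qc p.1 p.2 * ‖s p.2 - gradient (fun y => Real.log (qc p.1 y)) p.2‖^2)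
        = fun p => (q0 p.1 * qc p.1 p.2 * ‖s p.2‖^2
            - 2 * (q0 p.1 * qc p.1 p.2
              * ⟪s p.2, gradient (fun y => Real.log (qc p.1 y)) p.2⟫))
            + q0 p.1 * qc p.1 p.2 * ‖gradient (fun y => Real.log (qc p.1 y)) p.2‖^2 := by
      funext p
      rw [norm_sub_sq_real]
      ring
    have i2 : Integrable (fun p : EuclideanSpace ℝ (Fin n) × EuclideanSpace ℝ (Fin n) =>
        2 * (q0 p.1 * qc p.1 p.2
          * ⟪s p.2, gradient (fun y => Real.log (qc p.1 y)) p.2⟫)) := hip_c.const_mul 2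
    have i1 : Integrable (fun p : EuclideanSpace ℝ (Fin n) × EuclideanSpace ℝ (Fin n) =>
        q0 p.1 * qc p.1 p.2 * ‖s p.2‖^2
        - 2 * (q0 p.1 * qc p.1 p.2
          * ⟪s p.2, gradient (fun y => Real.log (qc p.1 y)) p.2⟫)) := h_sc.sub i2
    rw [heq, integral_add i1 hscore_c, integral_sub h_sc i2, integral_const_mul]
  have hprod_s : ∫ p : EuclideanSpace ℝ (Fin n) × EuclideanSpace ℝ (Fin n),
      q0 p.1 * qc p.1 p.2 * ‖s p.2‖^2 = ∫ x, qt x * ‖s x‖^2 := by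
    rw [Measure.volume_eq_prod] at h_sc ⊢
    rw [integral_prod_symm _ h_sc]
    refine integral_congr_ae (Eventually.of_forall fun x => ?_)
    show (∫ x0, q0 x0 * qc x0 x * ‖s x‖^2) = qt x * ‖s x‖^2
    rw [integral_mul_const, ← hqt_def x]
  have hprod_ip : ∫ p : EuclideanSpace ℝ (Fin n) × EuclideanSpace ℝ (Fin n),
      q0 p.1 * qc p.1 p.2 * ⟪s p.2, gradient (fun y => Real.log (qc p.1 y)) p.2⟫
      = ∫ x, qt x * ⟪s x, gradient (fun y => Real.log (qt y)) x⟫ := by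
    have heq : (fun p : EuclideanSpace ℝ (Fin n) × EuclideanSpace ℝ (Fin n) =>
        q0 p.1 * qc p.1 p.2 * ⟪s p.2, gradient (fun y => Real.log (qc p.1 y)) p.2⟫)
        = fun p => ⟪s p.2, q0 p.1 • gradient (qc p.1) p.2⟫ := by
      funext p
      rw [hgradqc p.1 p.2, real_inner_smul_right, real_inner_smul_right]
      ring
    rw [heq]
    have hint : Integrable (fun p : EuclideanSpace ℝ (Fin n) × EuclideanSpace ℝ (Fin n) =>
        ⟪s p.2, q0 p.1 • gradient (qc p.1) p.2⟫) := by
      rw [← heq]; exact hip_c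
    rw [Measure.volume_eq_prod] at hint ⊢
    rw [integral_prod_symm _ hint]
    rw [Measure.volume_eq_prod] at hscore_c
    have hae : ∀ᵐ x : EuclideanSpace ℝ (Fin n),
        Integrable (fun x0 => q0 x0 • gradient (qc x0) x) := by
      filter_upwards [hscore_c.prod_left_ae] with x hx
      refine Integrable.mono'
        (g := fun x0 => 1/2 * (q0 x0 * qc x0 x)
          + 1/2 * (q0 x0 * qc x0 x * ‖gradient (fun y => Real.log (qc x0 y)) x‖^2))
        (((hqint x).const_mul (1/2)).add (hx.const_mul (1/2))) ?_ ?_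
      · exact (hq0_meas.smul (hMgradqc.comp
          (measurable_id.prodMk measurable_const))).aestronglyMeasurable
      · refine Eventually.of_forall fun x0 => ?_
        have h1' : ‖q0 x0 • gradient (qc x0) x‖
            = q0 x0 * (qc x0 x * ‖gradient (fun y => Real.log (qc x0 y)) x‖) := by
          rw [norm_smul, Real.norm_eq_abs, abs_of_nonneg (hq0_nonneg x0),
            hgradqc x0 x, norm_smul, Real.norm_eq_abs, abs_of_nonneg (hqc_pos x0 x).le]
        rw [h1']
        show _ ≤ 1/2 * (q0 x0 * qc x0 x)
          + 1/2 * (q0 x0 * qc x0 x * ‖gradient (fun y => Real.log (qc x0 y)) x‖^2)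
        have hnn : 0 ≤ q0 x0 * qc x0 x := mul_nonneg (hq0_nonneg x0) (hqc_pos x0 x).le
        nlinarith [norm_nonneg (gradient (fun y => Real.log (qc x0 y)) x),
          mul_nonneg hnn (sq_nonneg (‖gradient (fun y => Real.log (qc x0 y)) x‖ - 1))]
    refine integral_congr_ae ?_
    filter_upwards [hae] with x hx
    rw [integral_inner hx]
    have hsw : (∫ x0, q0 x0 • gradient (qc x0) x) = gradient qt x := (hswap x).symm
    rw [show (∫ x0, q0 x0 • gradient (fun y => qc x0 y) x) = gradient qt x from hsw,
      hg x, real_inner_smul_right, ← mul_assoc, mul_inv_cancel₀ (hqt_pos x).ne', one_mul]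
  rw [EJ1, EJ2, hprod_s, hprod_ip]
  ring
end

section
/- Under the hypotheses of the score-matching equivalence theorem (strictly positive differentiable conditional densities q_t(·|x_0) on ℝ^n with differentiable marginal q_t and valid differentiation under the integral sign, and finiteness of all relevant expectations), any measurable s* : ℝ^n → ℝ^n minimizing J_2(s) = (1/2) E_{(x_0,x) ~ q_0(x_0) q_t(x|x_0)}[ ‖s(x) − ∇_x log q_t(x|x_0)‖² ] over all such functions also minimizes J_1(s) = (1/2) E_{x ~ q_t}[ ‖s(x) − ∇_x log q_t(x)‖² ]; in particular s*(x) = ∇_x log q_t(x) for q_t-almost every x. -/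
open MeasureTheory Real
open scoped RealInnerProductSpace

private lemma sm_integrable_of_ne {α : Type*} [MeasurableSpace α] {μ : Measure α}
    {f : α → ℝ} (h : ∫ x, f x ∂μ ≠ 0) : Integrable f μ := by
  by_contra hc
  rw [integral_undef hc] at h
  exact h rfl

private lemma sm_grad_log_eq {n : ℕ} (f : EuclideanSpace ℝ (Fin n) → ℝ)
    (x : EuclideanSpace ℝ (Fin n)) (hd : DifferentiableAt ℝ f x) (hx : f x ≠ 0) :
    gradient (fun y => Real.log (f y)) x = (f x)⁻¹ • gradient f x := by
  have h2 := (hd.hasFDerivAt).log hx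
  rw [gradient, gradient, h2.fderiv, map_smulₛₗ]
  simp

private lemma sm_measurable_grad_fam {n : ℕ} {α : Type*} [MeasurableSpace α]
    (f : α → EuclideanSpace ℝ (Fin n) → ℝ)
    (hf : Measurable (Function.uncurry f))
    (hdiff : ∀ a, Differentiable ℝ (f a)) :
    Measurable (fun p : α × EuclideanSpace ℝ (Fin n) => gradient (f p.1) p.2) := by
  have hfd : ∀ v : EuclideanSpace ℝ (Fin n),
      Measurable (fun p : α × EuclideanSpace ℝ (Fin n) => fderiv ℝ (f p.1) p.2 v) := by
    intro v
    have hm : ∀ m : ℕ, Measurable (fun p : α × EuclideanSpace ℝ (Fin n) =>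
        ((m : ℝ) + 1) * (f p.1 (p.2 + ((m : ℝ) + 1)⁻¹ • v) - f p.1 p.2)) := by
      intro m
      have h1 : Measurable (fun p : α × EuclideanSpace ℝ (Fin n) =>
          f p.1 (p.2 + ((m : ℝ) + 1)⁻¹ • v)) :=
        hf.comp (measurable_fst.prodMk (measurable_snd.add_const _))
      exact (h1.sub hf).const_mul _
    refine measurable_of_tendsto_metrizable hm ?_
    rw [tendsto_pi_nhds]
    intro p
    have hc : Filter.Tendsto (fun m : ℕ => ‖(m : ℝ) + 1‖) Filter.atTop Filter.atTop := by
      have h1 : Filter.Tendsto (fun m : ℕ => (m : ℝ) + 1) Filter.atTop Filter.atTop :=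
        Filter.tendsto_atTop_add_const_right _ 1 tendsto_natCast_atTop_atTop
      simpa [Real.norm_eq_abs, Function.comp_def] using Filter.tendsto_abs_atTop_atTop.comp h1
    have := (((hdiff p.1) p.2).hasFDerivAt).lim v hc
    simpa [smul_eq_mul] using this
  have hcoord : ∀ i : Fin n, Measurable (fun p : α × EuclideanSpace ℝ (Fin n) =>
      gradient (f p.1) p.2 i) := by
    intro i
    have heq : ∀ p : α × EuclideanSpace ℝ (Fin n),
        gradient (f p.1) p.2 i = fderiv ℝ (f p.1) p.2 (EuclideanSpace.single i (1:ℝ)) := by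
      intro p
      have h1 : ⟪gradient (f p.1) p.2, EuclideanSpace.single i (1:ℝ)⟫
          = fderiv ℝ (f p.1) p.2 (EuclideanSpace.single i (1:ℝ)) := by
        rw [gradient]; exact InnerProductSpace.toDual_symm_apply
      rw [EuclideanSpace.inner_single_right] at h1
      simpa using h1
    simp only [heq]
    exact hfd _
  exact (MeasurableEquiv.toLp 2 (Fin n → ℝ)).measurable.comp (measurable_pi_iff.mpr hcoord)

private lemma sm_integral_expand {n : ℕ} {α : Type*} [MeasurableSpace α] {μ : Measure α}
    {w : α → ℝ} {u v : α → EuclideanSpace ℝ (Fin n)}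
    (h1 : Integrable (fun x => w x * ‖u x‖ ^ 2) μ)
    (h2 : Integrable (fun x => w x * ⟪u x, v x⟫) μ)
    (h3 : Integrable (fun x => w x * ‖v x‖ ^ 2) μ) :
    ∫ x, w x * ‖u x - v x‖ ^ 2 ∂μ
      = (∫ x, w x * ‖u x‖ ^ 2 ∂μ) - 2 * (∫ x, w x * ⟪u x, v x⟫ ∂μ)
        + ∫ x, w x * ‖v x‖ ^ 2 ∂μ := by
  have hpt : ∀ x, w x * ‖u x - v x‖ ^ 2
      = w x * ‖u x‖ ^ 2 - 2 * (w x * ⟪u x, v x⟫) + w x * ‖v x‖ ^ 2 := by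
    intro x
    rw [norm_sub_sq_real]
    ring
  simp only [hpt]
  have e1 : Integrable (fun x => w x * ‖u x‖ ^ 2 - 2 * (w x * ⟪u x, v x⟫)) μ :=
    h1.sub (h2.const_mul 2)
  rw [integral_add e1 h3, integral_sub h1 (h2.const_mul 2), integral_const_mul 2 _]

/-- **A minimizer of the denoising objective J₂ also minimizes the explicit objective J₁**,
and a.e. (w.r.t. the marginal `q_t`) equals the marginal score `∇ log q_t`.
Admissible score models are measurable vector fields with finite second moment under `q_t`. -/
theorem minimizer_J2_minimizes_J1 {n : ℕ}
    (q0 : EuclideanSpace ℝ (Fin n) → ℝ)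
    (qc : EuclideanSpace ℝ (Fin n) → EuclideanSpace ℝ (Fin n) → ℝ)
    (qt : EuclideanSpace ℝ (Fin n) → ℝ)
    -- q0 is a probability density
    (hq0_nonneg : ∀ x0, 0 ≤ q0 x0)
    (hq0_meas : Measurable q0)
    (hq0_prob : ∫ x0, q0 x0 = 1)
    -- strictly positive differentiable conditional probability densities
    (hqc_pos : ∀ x0 x, 0 < qc x0 x)
    (hqc_diff : ∀ x0, Differentiable ℝ (qc x0))
    (hqc_meas : Measurable (Function.uncurry qc))
    (hqc_prob : ∀ x0, ∫ x, qc x0 x = 1)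
    -- qt is the marginal density, strictly positive and differentiable
    (hqt_def : ∀ x, qt x = ∫ x0, q0 x0 * qc x0 x)
    (hqt_pos : ∀ x, 0 < qt x)
    (hqt_diff : Differentiable ℝ qt)
    -- differentiation under the integral sign is valid
    (hswap : ∀ x, gradient qt x = ∫ x0, q0 x0 • gradient (fun y => qc x0 y) x)
    -- finiteness of all relevant (s-independent) expectations
    (hscore_t : Integrable (fun x => qt x * ‖gradient (fun y => Real.log (qt y)) x‖ ^ 2))
    (hscore_c : Integrable (fun p : EuclideanSpace ℝ (Fin n) × EuclideanSpace ℝ (Fin n) =>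
      q0 p.1 * qc p.1 p.2 * ‖gradient (fun y => Real.log (qc p.1 y)) p.2‖ ^ 2))
    -- sstar is admissible and minimizes J₂ over all admissible score models
    (sstar : EuclideanSpace ℝ (Fin n) → EuclideanSpace ℝ (Fin n))
    (hstar_meas : Measurable sstar)
    (hstar_mom : Integrable (fun x => qt x * ‖sstar x‖ ^ 2))
    (hmin : ∀ s : EuclideanSpace ℝ (Fin n) → EuclideanSpace ℝ (Fin n),
      Measurable s → Integrable (fun x => qt x * ‖s x‖ ^ 2) →
      (1 / 2) * (∫ p : EuclideanSpace ℝ (Fin n) × EuclideanSpace ℝ (Fin n),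
          q0 p.1 * qc p.1 p.2 * ‖sstar p.2 - gradient (fun y => Real.log (qc p.1 y)) p.2‖ ^ 2)
        ≤ (1 / 2) * ∫ p : EuclideanSpace ℝ (Fin n) × EuclideanSpace ℝ (Fin n),
            q0 p.1 * qc p.1 p.2 * ‖s p.2 - gradient (fun y => Real.log (qc p.1 y)) p.2‖ ^ 2) :
    -- sstar also minimizes J₁ over all admissible score models, and equals the score q_t-a.e.
    (∀ s : EuclideanSpace ℝ (Fin n) → EuclideanSpace ℝ (Fin n),
      Measurable s → Integrable (fun x => qt x * ‖s x‖ ^ 2) →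
      (1 / 2) * (∫ x, qt x * ‖sstar x - gradient (fun y => Real.log (qt y)) x‖ ^ 2)
        ≤ (1 / 2) * ∫ x, qt x * ‖s x - gradient (fun y => Real.log (qt y)) x‖ ^ 2) ∧
    (∀ᵐ x ∂(volume.withDensity fun x => ENNReal.ofReal (qt x)),
      sstar x = gradient (fun y => Real.log (qt y)) x) := by
  classical
  -- notation
  set g : EuclideanSpace ℝ (Fin n) → EuclideanSpace ℝ (Fin n) :=
    gradient (fun y => Real.log (qt y)) with hgdef
  set c : EuclideanSpace ℝ (Fin n) × EuclideanSpace ℝ (Fin n) → EuclideanSpace ℝ (Fin n) :=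
    fun p => gradient (fun y => Real.log (qc p.1 y)) p.2 with hcdef
  have hqc_ne : ∀ x0 x, qc x0 x ≠ 0 := fun x0 x => (hqc_pos x0 x).ne'
  have hqt_ne : ∀ x, qt x ≠ 0 := fun x => (hqt_pos x).ne'
  -- basic measurability
  have hqt_meas : Measurable qt := hqt_diff.continuous.measurable
  have hmeas_rho : Measurable (fun p : EuclideanSpace ℝ (Fin n) × EuclideanSpace ℝ (Fin n) =>
      q0 p.1 * qc p.1 p.2) := (hq0_meas.comp measurable_fst).mul hqc_meas
  have hrho_nonneg : ∀ p : EuclideanSpace ℝ (Fin n) × EuclideanSpace ℝ (Fin n),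
      0 ≤ q0 p.1 * qc p.1 p.2 := fun p => mul_nonneg (hq0_nonneg p.1) (hqc_pos p.1 p.2).le
  have hmeas_slice : ∀ x, Measurable (fun x0 => q0 x0 * qc x0 x) := fun x =>
    hq0_meas.mul (hqc_meas.comp (measurable_id.prodMk measurable_const))
  have hmeas_qcs : ∀ x0, Measurable (qc x0) := fun x0 =>
    hqc_meas.comp (measurable_const.prodMk measurable_id)
  have hmeas_c : Measurable c := by
    refine sm_measurable_grad_fam (fun x0 => fun y => Real.log (qc x0 y)) ?_ ?_
    · exact Real.measurable_log.comp hqc_meas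
    · intro a
      exact (hqc_diff a).log (fun y => hqc_ne a y)
  have hmeas_g : Measurable g := by
    have h := sm_measurable_grad_fam (n := n) (α := Unit) (fun _ => fun y => Real.log (qt y))
      (Real.measurable_log.comp (hqt_meas.comp measurable_snd))
      (fun _ => hqt_diff.log hqt_ne)
    have h2 : Measurable (fun x : EuclideanSpace ℝ (Fin n) =>
        (((), x) : Unit × EuclideanSpace ℝ (Fin n))) :=
      measurable_const.prodMk measurable_id
    exact h.comp h2
  have hmeas_gradqc : Measurable (fun p : EuclideanSpace ℝ (Fin n) × EuclideanSpace ℝ (Fin n) =>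
      gradient (fun y => qc p.1 y) p.2) :=
    sm_measurable_grad_fam qc hqc_meas hqc_diff
  -- chain rules
  have hc_eq : ∀ p : EuclideanSpace ℝ (Fin n) × EuclideanSpace ℝ (Fin n),
      c p = (qc p.1 p.2)⁻¹ • gradient (fun y => qc p.1 y) p.2 :=
    fun p => sm_grad_log_eq (fun y => qc p.1 y) p.2 ((hqc_diff p.1) p.2) (hqc_ne p.1 p.2)
  have hg_eq : ∀ x, g x = (qt x)⁻¹ • gradient qt x :=
    fun x => sm_grad_log_eq qt x (hqt_diff x) (hqt_ne x)
  -- integrability of basic densities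
  have hq0_int : Integrable q0 := sm_integrable_of_ne (by rw [hq0_prob]; norm_num)
  have hqc_int : ∀ x0, Integrable (qc x0) :=
    fun x0 => sm_integrable_of_ne (by rw [hqc_prob x0]; norm_num)
  have hslice_int : ∀ x, Integrable (fun x0 => q0 x0 * qc x0 x) :=
    fun x => sm_integrable_of_ne (by rw [← hqt_def x]; exact hqt_ne x)
  -- lintegral computations
  have lq0 : ∫⁻ x0, ENNReal.ofReal (q0 x0) = 1 := by
    rw [← ofReal_integral_eq_lintegral_ofReal hq0_int (Filter.Eventually.of_forall hq0_nonneg),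
      hq0_prob, ENNReal.ofReal_one]
  have lqc : ∀ x0, ∫⁻ x, ENNReal.ofReal (qc x0 x) = 1 := by
    intro x0
    rw [← ofReal_integral_eq_lintegral_ofReal (hqc_int x0)
      (Filter.Eventually.of_forall (fun x => (hqc_pos x0 x).le)), hqc_prob x0, ENNReal.ofReal_one]
  have lslice : ∀ x, ∫⁻ x0, ENNReal.ofReal (q0 x0 * qc x0 x) = ENNReal.ofReal (qt x) := by
    intro x
    rw [← ofReal_integral_eq_lintegral_ofReal (hslice_int x)
      (Filter.Eventually.of_forall (fun x0 => mul_nonneg (hq0_nonneg x0) (hqc_pos x0 x).le)),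
      hqt_def x]
  have lqt : ∫⁻ x, ENNReal.ofReal (qt x) = 1 := by
    have hswap' : ∫⁻ x, ∫⁻ x0, ENNReal.ofReal (q0 x0 * qc x0 x)
        = ∫⁻ x0, ∫⁻ x, ENNReal.ofReal (q0 x0 * qc x0 x) := by
      refine lintegral_lintegral_swap ?_
      exact (((hq0_meas.comp measurable_snd).mul
        (hqc_meas.comp (measurable_snd.prodMk measurable_fst))).ennreal_ofReal).aemeasurable
    calc ∫⁻ x, ENNReal.ofReal (qt x)
        = ∫⁻ x, ∫⁻ x0, ENNReal.ofReal (q0 x0 * qc x0 x) :=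
          lintegral_congr fun x => (lslice x).symm
      _ = ∫⁻ x0, ∫⁻ x, ENNReal.ofReal (q0 x0 * qc x0 x) := hswap'
      _ = ∫⁻ x0, ENNReal.ofReal (q0 x0) := by
          refine lintegral_congr fun x0 => ?_
          calc ∫⁻ x, ENNReal.ofReal (q0 x0 * qc x0 x)
              = ∫⁻ x, ENNReal.ofReal (q0 x0) * ENNReal.ofReal (qc x0 x) :=
                lintegral_congr fun x => by rw [ENNReal.ofReal_mul (hq0_nonneg x0)]
            _ = ENNReal.ofReal (q0 x0) * ∫⁻ x, ENNReal.ofReal (qc x0 x) :=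
                lintegral_const_mul _ ((hmeas_qcs x0).ennreal_ofReal)
            _ = ENNReal.ofReal (q0 x0) := by rw [lqc x0, mul_one]
      _ = 1 := lq0
  have hqt_int : Integrable qt :=
    ⟨hqt_meas.aestronglyMeasurable, by
      rw [hasFiniteIntegral_iff_ofReal (Filter.Eventually.of_forall fun x => (hqt_pos x).le), lqt]
      exact ENNReal.one_lt_top⟩
  -- key lintegral transfer
  have key_lint : ∀ h : EuclideanSpace ℝ (Fin n) → ℝ, Measurable h → (∀ x, 0 ≤ h x) →
      ∫⁻ p : EuclideanSpace ℝ (Fin n) × EuclideanSpace ℝ (Fin n),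
        ENNReal.ofReal (q0 p.1 * qc p.1 p.2 * h p.2)
      = ∫⁻ x, ENNReal.ofReal (qt x * h x) := by
    intro h hm hnn
    have hmh : Measurable (fun p : EuclideanSpace ℝ (Fin n) × EuclideanSpace ℝ (Fin n) =>
        q0 p.1 * qc p.1 p.2 * h p.2) := hmeas_rho.mul (hm.comp measurable_snd)
    rw [MeasureTheory.Measure.volume_eq_prod, lintegral_prod_symm' _ hmh.ennreal_ofReal]
    refine lintegral_congr fun x => ?_
    calc ∫⁻ x0, ENNReal.ofReal (q0 x0 * qc x0 x * h x)
        = ∫⁻ x0, ENNReal.ofReal (q0 x0 * qc x0 x) * ENNReal.ofReal (h x) :=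
          lintegral_congr fun x0 => by
            rw [ENNReal.ofReal_mul (mul_nonneg (hq0_nonneg x0) (hqc_pos x0 x).le)]
      _ = (∫⁻ x0, ENNReal.ofReal (q0 x0 * qc x0 x)) * ENNReal.ofReal (h x) := by
          rw [lintegral_mul_const _ ((hmeas_slice x).ennreal_ofReal)]
      _ = ENNReal.ofReal (qt x) * ENNReal.ofReal (h x) := by rw [lslice x]
      _ = ENNReal.ofReal (qt x * h x) := (ENNReal.ofReal_mul (hqt_pos x).le).symm
  -- key integrability transfer
  have key_int : ∀ h : EuclideanSpace ℝ (Fin n) → ℝ, Measurable h → (∀ x, 0 ≤ h x) →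
      Integrable (fun x => qt x * h x) →
      Integrable (fun p : EuclideanSpace ℝ (Fin n) × EuclideanSpace ℝ (Fin n) =>
        q0 p.1 * qc p.1 p.2 * h p.2) := by
    intro h hm hnn hint
    refine ⟨(hmeas_rho.mul (hm.comp measurable_snd)).aestronglyMeasurable, ?_⟩
    rw [hasFiniteIntegral_iff_ofReal
      (Filter.Eventually.of_forall fun p => mul_nonneg (hrho_nonneg p) (hnn p.2)),
      key_lint h hm hnn]
    have hfin := hint.hasFiniteIntegral
    rwa [hasFiniteIntegral_iff_ofReal
      (Filter.Eventually.of_forall fun x => mul_nonneg (hqt_pos x).le (hnn x))] at hfin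
  -- key integral transfer
  have key_eq : ∀ h : EuclideanSpace ℝ (Fin n) → ℝ, Measurable h → (∀ x, 0 ≤ h x) →
      ∫ p : EuclideanSpace ℝ (Fin n) × EuclideanSpace ℝ (Fin n),
        q0 p.1 * qc p.1 p.2 * h p.2 = ∫ x, qt x * h x := by
    intro h hm hnn
    rw [integral_eq_lintegral_of_nonneg_ae
        (Filter.Eventually.of_forall fun p => mul_nonneg (hrho_nonneg p) (hnn p.2))
        (hmeas_rho.mul (hm.comp measurable_snd)).aestronglyMeasurable,
      integral_eq_lintegral_of_nonneg_ae
        (Filter.Eventually.of_forall fun x => mul_nonneg (hqt_pos x).le (hnn x))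
        (hqt_meas.mul hm).aestronglyMeasurable,
      key_lint h hm hnn]
  -- integrability of the joint density
  have hrho_int : Integrable (fun p : EuclideanSpace ℝ (Fin n) × EuclideanSpace ℝ (Fin n) =>
      q0 p.1 * qc p.1 p.2) := by
    have h := key_int (fun _ => 1) measurable_const (fun _ => zero_le_one)
      (by simpa using hqt_int)
    simpa using h
  -- the vector field V and its properties
  set V : EuclideanSpace ℝ (Fin n) × EuclideanSpace ℝ (Fin n) → EuclideanSpace ℝ (Fin n) :=
    fun p => q0 p.1 • gradient (fun y => qc p.1 y) p.2 with hVdef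
  have hmeas_V : Measurable V := (hq0_meas.comp measurable_fst).smul hmeas_gradqc
  have hnormV : ∀ p : EuclideanSpace ℝ (Fin n) × EuclideanSpace ℝ (Fin n),
      ‖V p‖ = q0 p.1 * qc p.1 p.2 * ‖c p‖ := by
    intro p
    have h5 : ‖(qc p.1 p.2)⁻¹ • gradient (fun y => qc p.1 y) p.2‖
        = (qc p.1 p.2)⁻¹ * ‖gradient (fun y => qc p.1 y) p.2‖ := by
      rw [norm_smul, Real.norm_eq_abs, abs_of_pos (inv_pos.mpr (hqc_pos p.1 p.2))]
    have h6 : ‖V p‖ = q0 p.1 * ‖gradient (fun y => qc p.1 y) p.2‖ := by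
      rw [hVdef, norm_smul, Real.norm_eq_abs, abs_of_nonneg (hq0_nonneg p.1)]
    rw [h6, hc_eq p, h5]
    field_simp
    rw [eq_div_iff (hqc_ne p.1 p.2)]
  have hscore_c' : Integrable (fun p : EuclideanSpace ℝ (Fin n) × EuclideanSpace ℝ (Fin n) =>
      q0 p.1 * qc p.1 p.2 * ‖c p‖ ^ 2) := hscore_c
  have hrhoc_int : Integrable (fun p : EuclideanSpace ℝ (Fin n) × EuclideanSpace ℝ (Fin n) =>
      q0 p.1 * qc p.1 p.2 * ‖c p‖) := by
    have hb : Integrable (fun p : EuclideanSpace ℝ (Fin n) × EuclideanSpace ℝ (Fin n) =>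
        (q0 p.1 * qc p.1 p.2 + q0 p.1 * qc p.1 p.2 * ‖c p‖ ^ 2) / 2) :=
      (hrho_int.add hscore_c').div_const 2
    refine hb.mono ((hmeas_rho.mul hmeas_c.norm).aestronglyMeasurable) ?_
    refine Filter.Eventually.of_forall fun p => ?_
    have h1 := hrho_nonneg p
    have h2 : (0:ℝ) ≤ ‖c p‖ := norm_nonneg _
    have h3 : (0:ℝ) ≤ (q0 p.1 * qc p.1 p.2 + q0 p.1 * qc p.1 p.2 * ‖c p‖ ^ 2) / 2 :=
      div_nonneg (add_nonneg h1 (mul_nonneg h1 (sq_nonneg _))) (by norm_num)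
    rw [Real.norm_eq_abs, abs_of_nonneg (mul_nonneg h1 h2), Real.norm_eq_abs, abs_of_nonneg h3]
    nlinarith [mul_nonneg h1 (sq_nonneg (1 - ‖c p‖))]
  have hV_int : Integrable V ((volume : Measure (EuclideanSpace ℝ (Fin n))).prod volume) := by
    rw [← MeasureTheory.Measure.volume_eq_prod]
    refine hrhoc_int.mono' hmeas_V.aestronglyMeasurable ?_
    exact Filter.Eventually.of_forall fun p => le_of_eq (hnormV p)
  have hVslice : ∀ᵐ x : EuclideanSpace ℝ (Fin n),
      Integrable (fun x0 => V (x0, x)) := hV_int.prod_left_ae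
  -- cross-term integrability on the marginal side
  have I_sg_gen : ∀ s : EuclideanSpace ℝ (Fin n) → EuclideanSpace ℝ (Fin n), Measurable s →
      Integrable (fun x => qt x * ‖s x‖ ^ 2) →
      Integrable (fun x => qt x * ⟪s x, g x⟫) := by
    intro s hs hs2
    have hb : Integrable (fun x => (qt x * ‖s x‖ ^ 2 + qt x * ‖g x‖ ^ 2) / 2) :=
      (hs2.add hscore_t).div_const 2
    refine hb.mono ((hqt_meas.mul (hs.inner hmeas_g)).aestronglyMeasurable) ?_
    refine Filter.Eventually.of_forall fun x => ?_
    have h1 := (hqt_pos x).le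
    have h2 := abs_real_inner_le_norm (s x) (g x)
    have h3 : (0:ℝ) ≤ (qt x * ‖s x‖ ^ 2 + qt x * ‖g x‖ ^ 2) / 2 :=
      div_nonneg (add_nonneg (mul_nonneg h1 (sq_nonneg _)) (mul_nonneg h1 (sq_nonneg _)))
        (by norm_num)
    rw [Real.norm_eq_abs, abs_mul, abs_of_nonneg h1, Real.norm_eq_abs, abs_of_nonneg h3]
    nlinarith [mul_nonneg h1 (sq_nonneg (‖s x‖ - ‖g x‖)), abs_nonneg ⟪s x, g x⟫,
      mul_le_mul_of_nonneg_left h2 h1]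
  -- the master identity
  have main_eq : ∀ s : EuclideanSpace ℝ (Fin n) → EuclideanSpace ℝ (Fin n), Measurable s →
      Integrable (fun x => qt x * ‖s x‖ ^ 2) →
      (∫ p : EuclideanSpace ℝ (Fin n) × EuclideanSpace ℝ (Fin n),
          q0 p.1 * qc p.1 p.2 * ‖s p.2 - gradient (fun y => Real.log (qc p.1 y)) p.2‖ ^ 2)
        = (∫ x, qt x * ‖s x - g x‖ ^ 2)
          + ((∫ p : EuclideanSpace ℝ (Fin n) × EuclideanSpace ℝ (Fin n),
              q0 p.1 * qc p.1 p.2 * ‖gradient (fun y => Real.log (qc p.1 y)) p.2‖ ^ 2)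
            - ∫ x, qt x * ‖g x‖ ^ 2) := by
    intro s hs hs2
    have hsn : Measurable fun x : EuclideanSpace ℝ (Fin n) => ‖s x‖ ^ 2 := hs.norm.pow_const 2
    have I_ss : Integrable (fun p : EuclideanSpace ℝ (Fin n) × EuclideanSpace ℝ (Fin n) =>
        q0 p.1 * qc p.1 p.2 * ‖s p.2‖ ^ 2) :=
      key_int _ hsn (fun x => sq_nonneg _) hs2
    have E_ss : (∫ p : EuclideanSpace ℝ (Fin n) × EuclideanSpace ℝ (Fin n),
        q0 p.1 * qc p.1 p.2 * ‖s p.2‖ ^ 2) = ∫ x, qt x * ‖s x‖ ^ 2 :=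
      key_eq _ hsn (fun x => sq_nonneg _)
    have I_sc : Integrable (fun p : EuclideanSpace ℝ (Fin n) × EuclideanSpace ℝ (Fin n) =>
        q0 p.1 * qc p.1 p.2 * ⟪s p.2, c p⟫) := by
      have hb : Integrable (fun p : EuclideanSpace ℝ (Fin n) × EuclideanSpace ℝ (Fin n) =>
          (q0 p.1 * qc p.1 p.2 * ‖s p.2‖ ^ 2 + q0 p.1 * qc p.1 p.2 * ‖c p‖ ^ 2) / 2) :=
        (I_ss.add hscore_c').div_const 2
      refine hb.mono
        ((hmeas_rho.mul ((hs.comp measurable_snd).inner hmeas_c)).aestronglyMeasurable) ?_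
      refine Filter.Eventually.of_forall fun p => ?_
      have h1 := hrho_nonneg p
      have h2 := abs_real_inner_le_norm (s p.2) (c p)
      have h3 : (0:ℝ) ≤ (q0 p.1 * qc p.1 p.2 * ‖s p.2‖ ^ 2
          + q0 p.1 * qc p.1 p.2 * ‖c p‖ ^ 2) / 2 :=
        div_nonneg (add_nonneg (mul_nonneg h1 (sq_nonneg _)) (mul_nonneg h1 (sq_nonneg _)))
          (by norm_num)
      rw [Real.norm_eq_abs, abs_mul, abs_of_nonneg h1, Real.norm_eq_abs, abs_of_nonneg h3]
      nlinarith [mul_nonneg h1 (sq_nonneg (‖s p.2‖ - ‖c p‖)), abs_nonneg ⟪s p.2, c p⟫,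
        mul_le_mul_of_nonneg_left h2 h1]
    have I_sg : Integrable (fun x => qt x * ⟪s x, g x⟫) := I_sg_gen s hs hs2
    -- pointwise form of the cross term
    have hptwise : ∀ p : EuclideanSpace ℝ (Fin n) × EuclideanSpace ℝ (Fin n),
        q0 p.1 * qc p.1 p.2 * ⟪s p.2, c p⟫ = ⟪s p.2, V p⟫ := by
      intro p
      have hV : V p = q0 p.1 • gradient (fun y => qc p.1 y) p.2 := rfl
      rw [hV, hc_eq p, real_inner_smul_right, real_inner_smul_right]
      have hne := hqc_ne p.1 p.2
      field_simp
    have I_inner : Integrable (fun p : EuclideanSpace ℝ (Fin n) × EuclideanSpace ℝ (Fin n) =>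
        ⟪s p.2, V p⟫) ((volume : Measure (EuclideanSpace ℝ (Fin n))).prod volume) := by
      rw [← MeasureTheory.Measure.volume_eq_prod]
      exact I_sc.congr (Filter.Eventually.of_forall hptwise)
    have cross : (∫ p : EuclideanSpace ℝ (Fin n) × EuclideanSpace ℝ (Fin n),
        q0 p.1 * qc p.1 p.2 * ⟪s p.2, c p⟫) = ∫ x, qt x * ⟪s x, g x⟫ := by
      have h1 : (∫ p : EuclideanSpace ℝ (Fin n) × EuclideanSpace ℝ (Fin n),
          q0 p.1 * qc p.1 p.2 * ⟪s p.2, c p⟫)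
          = ∫ p : EuclideanSpace ℝ (Fin n) × EuclideanSpace ℝ (Fin n), ⟪s p.2, V p⟫ :=
        integral_congr_ae (Filter.Eventually.of_forall hptwise)
      rw [h1, MeasureTheory.Measure.volume_eq_prod, integral_prod_symm _ I_inner]
      refine integral_congr_ae ?_
      filter_upwards [hVslice] with x hx
      have h2 : (∫ x0, ⟪s x, V (x0, x)⟫) = ⟪s x, ∫ x0, V (x0, x)⟫ := integral_inner hx (s x)
      have h3 : (∫ x0, V (x0, x)) = gradient qt x := (hswap x).symm
      rw [h2, h3, hg_eq x, real_inner_smul_right, ← mul_assoc, mul_inv_cancel₀ (hqt_ne x),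
        one_mul]
    have expandP := sm_integral_expand
      (w := fun p : EuclideanSpace ℝ (Fin n) × EuclideanSpace ℝ (Fin n) => q0 p.1 * qc p.1 p.2)
      (u := fun p : EuclideanSpace ℝ (Fin n) × EuclideanSpace ℝ (Fin n) => s p.2)
      (v := c) I_ss I_sc hscore_c'
    have expandM := sm_integral_expand (w := qt) (u := s) (v := g) hs2 I_sg hscore_t
    have hcgr : (∫ p : EuclideanSpace ℝ (Fin n) × EuclideanSpace ℝ (Fin n),
        q0 p.1 * qc p.1 p.2 * ‖s p.2 - gradient (fun y => Real.log (qc p.1 y)) p.2‖ ^ 2)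
        = ∫ p : EuclideanSpace ℝ (Fin n) × EuclideanSpace ℝ (Fin n),
          q0 p.1 * qc p.1 p.2 * ‖s p.2 - c p‖ ^ 2 := rfl
    have hcgr2 : (∫ p : EuclideanSpace ℝ (Fin n) × EuclideanSpace ℝ (Fin n),
        q0 p.1 * qc p.1 p.2 * ‖gradient (fun y => Real.log (qc p.1 y)) p.2‖ ^ 2)
        = ∫ p : EuclideanSpace ℝ (Fin n) × EuclideanSpace ℝ (Fin n),
          q0 p.1 * qc p.1 p.2 * ‖c p‖ ^ 2 := rfl
    rw [hcgr, hcgr2]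
    rw [expandP, expandM, E_ss, cross]
    ring
  -- apply minimality with the marginal score as competitor
  have h1 := main_eq sstar hstar_meas hstar_mom
  have h2 := main_eq g hmeas_g hscore_t
  have hmin' := hmin g hmeas_g hscore_t
  have hzero_gg : (∫ x, qt x * ‖g x - g x‖ ^ 2) = 0 := by simp
  have hA' : 0 ≤ ∫ x, qt x * ‖sstar x - g x‖ ^ 2 :=
    integral_nonneg fun x => mul_nonneg (hqt_pos x).le (sq_nonneg _)
  have hAzero : (∫ x, qt x * ‖sstar x - g x‖ ^ 2) = 0 := by
    have : (∫ x, qt x * ‖sstar x - g x‖ ^ 2) ≤ 0 := by linarith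
    linarith
  constructor
  · intro s hs hs2
    rw [hAzero, mul_zero]
    exact mul_nonneg (by norm_num)
      (integral_nonneg fun x => mul_nonneg (hqt_pos x).le (sq_nonneg _))
  · have hInt0 : Integrable (fun x => qt x * ‖sstar x - g x‖ ^ 2) := by
      have e1 : Integrable (fun x =>
          qt x * ‖sstar x‖ ^ 2 - 2 * (qt x * ⟪sstar x, g x⟫) + qt x * ‖g x‖ ^ 2) :=
        (hstar_mom.sub ((I_sg_gen sstar hstar_meas hstar_mom).const_mul 2)).add hscore_t
      refine e1.congr (Filter.Eventually.of_forall fun x => ?_)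
      dsimp only
      rw [norm_sub_sq_real]
      ring
    have haezero := (integral_eq_zero_iff_of_nonneg
      (fun x => mul_nonneg (hqt_pos x).le (sq_nonneg _)) hInt0).mp hAzero
    have haeeq : ∀ᵐ x : EuclideanSpace ℝ (Fin n), sstar x = g x := by
      filter_upwards [haezero] with x hx
      simp only [Pi.zero_apply] at hx
      have h4 : ‖sstar x - g x‖ ^ 2 = 0 := by
        rcases mul_eq_zero.mp hx with h | h
        · exact absurd h (hqt_ne x)
        · exact h
      have h5 : sstar x - g x = 0 := by
        rw [← norm_eq_zero]
        exact (pow_eq_zero_iff (Nat.succ_ne_zero 1)).mp h4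
      exact sub_eq_zero.mp h5
    exact Filter.Eventually.filter_mono
      (Measure.AbsolutelyContinuous.ae_le (withDensity_absolutelyContinuous volume _)) haeeq
end
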